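/- If G is a connected graph and H1, ..., Hk is a partition of the vertex set of G into parts each inducing a connected subgraph, then rc(G) ≤ k - 1 + Σ_{i=1}^k rc(Hi). -/

import Mathlib

open SimpleGraph

/-- A graph `G` is rainbow connected under edge-coloring `c` if any two vertices are
joined by a path whose edges receive pairwise distinct colors. -/
def RainbowConnected {V : Type*} (G : SimpleGraph V) (c : Sym2 V → ℕ) : Prop :=
  ∀ u v : V, ∃ p : G.Walk u v, p.IsPath ∧ (p.edges.map c).Nodup

/-- The rainbow connection number: the least number of colors in an edge-coloring
making `G` rainbow connected. -/
noncomputable def rc {V : Type*} [Fintype V] (G : SimpleGraph V) : ℕ :=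
  sInf {n | ∃ c : Sym2 V → ℕ, (∀ e ∈ G.edgeSet, c e < n) ∧ RainbowConnected G c}

/-- Least `n` with `n ^ s ≥ t`, i.e. `⌈t^(1/s)⌉`. -/
noncomputable def ceilRoot (s t : ℕ) : ℕ := sInf {n | t ≤ n ^ s}

lemma sym2_forall_mem {α : Type*} {u v : α} {P : α → Prop} :
    (∀ x ∈ s(u, v), P x) ↔ P u ∧ P v := by
  constructor
  · intro h; exact ⟨h u (by simp), h v (by simp)⟩
  · rintro ⟨h1, h2⟩ x hx
    rcases Sym2.mem_iff.1 hx with rfl | rfl <;> assumption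

open Classical in
noncomputable def extendColor {V : Type*} (A : Set V) (c : Sym2 A → ℕ) : Sym2 V → ℕ :=
  Sym2.lift ⟨fun u v => if h : u ∈ A ∧ v ∈ A then c s(⟨u, h.1⟩, ⟨v, h.2⟩) else 0, by
    intro u v
    dsimp only
    by_cases h : u ∈ A ∧ v ∈ A
    · rw [dif_pos h, dif_pos ⟨h.2, h.1⟩, Sym2.eq_swap]
    · rw [dif_neg h, dif_neg (fun h' => h ⟨h'.2, h'.1⟩)]⟩

open Classical in
lemma extendColor_apply {V : Type*} (A : Set V) (c : Sym2 A → ℕ) (u v : A) :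
    extendColor A c (s(↑u, ↑v)) = c s(u, v) := by
  simp only [extendColor, Sym2.lift_mk]
  rw [dif_pos (⟨u.2, v.2⟩ : (u:V) ∈ A ∧ (v:V) ∈ A)]

lemma exists_rc_coloring {V : Type*} [Fintype V] [DecidableEq V] (G : SimpleGraph V)
    (hG : G.Connected) :
    ∃ c : Sym2 V → ℕ, (∀ e ∈ G.edgeSet, c e < rc G) ∧ RainbowConnected G c := by
  have hne : {n | ∃ c : Sym2 V → ℕ, (∀ e ∈ G.edgeSet, c e < n) ∧ RainbowConnected G c}.Nonempty := by
    refine ⟨Fintype.card (Sym2 V), fun e => (Fintype.equivFin (Sym2 V) e : ℕ), fun e _ => (Fintype.equivFin (Sym2 V) e).2, ?_⟩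
    intro u v
    obtain ⟨w⟩ := hG.preconnected u v
    exact ⟨w.toPath.1, w.toPath.2, ((w.toPath.2.edges_nodup).map (fun a b h => (Fintype.equivFin (Sym2 V)).injective (Fin.val_injective h)))⟩
  exact Nat.sInf_mem hne

lemma rc_transport {V V' : Type*} (G : SimpleGraph V) (G' : SimpleGraph V')
    (φ : G ≃g G') {n : ℕ}
    (h : ∃ c : Sym2 V' → ℕ, (∀ e ∈ G'.edgeSet, c e < n) ∧ RainbowConnected G' c) :
    ∃ c : Sym2 V → ℕ, (∀ e ∈ G.edgeSet, c e < n) ∧ RainbowConnected G c := by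
  obtain ⟨c', hb, hrc⟩ := h
  refine ⟨c' ∘ Sym2.map φ, ?_, ?_⟩
  · intro e he
    refine hb _ ?_
    induction e with
    | h x y =>
      rw [Sym2.map_pair_eq, SimpleGraph.mem_edgeSet] at *
      exact φ.map_adj_iff.2 he
  · intro u v
    obtain ⟨p, hp, hnd⟩ := hrc (φ u) (φ v)
    refine ⟨(p.map φ.symm.toHom).copy (φ.symm_apply_apply u) (φ.symm_apply_apply v), ?_, ?_⟩
    · rw [SimpleGraph.Walk.isPath_copy]
      exact p.map_isPath_of_injective φ.symm.injective hp
    · rw [SimpleGraph.Walk.edges_copy, SimpleGraph.Walk.edges_map, List.map_map]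
      convert hnd using 2
      funext e
      simp only [Function.comp_apply, Sym2.map_map]
      have : (fun x => φ (φ.symm.toHom x)) = id := by
        funext x; exact φ.apply_symm_apply x
      rw [this, Sym2.map_id, id_eq]

lemma rc_eq_of_iso {V V' : Type*} [Fintype V] [Fintype V'] (G : SimpleGraph V)
    (G' : SimpleGraph V') (φ : G ≃g G') : rc G = rc G' := by
  unfold rc
  congr 1
  ext n
  exact ⟨fun h => rc_transport G' G φ.symm h, fun h => rc_transport G G' φ h⟩

lemma merge_lemma {V : Type*} [Fintype V] [DecidableEq V] (G : SimpleGraph V)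
    (A B : Finset V) (hd : Disjoint A B)
    (hA : (G.induce (A : Set V)).Connected) (hB : (G.induce (B : Set V)).Connected)
    {a b : V} (ha : a ∈ A) (hb : b ∈ B) (hab : G.Adj a b) :
    (G.induce ((A ∪ B : Finset V) : Set V)).Connected ∧
      rc (G.induce ((A ∪ B : Finset V) : Set V)) ≤
        rc (G.induce (A : Set V)) + rc (G.induce (B : Set V)) + 1 := by
  classical
  obtain ⟨nA, hnA⟩ : ∃ n, n = rc (G.induce (A : Set V)) := ⟨_, rfl⟩
  obtain ⟨nB, hnB⟩ : ∃ n, n = rc (G.induce (B : Set V)) := ⟨_, rfl⟩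
  rw [← hnA, ← hnB]
  obtain ⟨cA, hcAb, hcA⟩ := exists_rc_coloring _ hA
  obtain ⟨cB, hcBb, hcB⟩ := exists_rc_coloring _ hB
  rw [← hnA] at hcAb
  rw [← hnB] at hcBb
  set S : Set V := ((A ∪ B : Finset V) : Set V) with hS
  have hmemS : ∀ x : V, x ∈ S ↔ x ∈ A ∨ x ∈ B := by
    intro x; simp [hS]
  have hAS : (A : Set V) ⊆ S := fun x hx => (hmemS x).2 (Or.inl hx)
  have hBS : (B : Set V) ⊆ S := fun x hx => (hmemS x).2 (Or.inr hx)
  let ιA : G.induce (A : Set V) →g G.induce S := ⟨Set.inclusion hAS, fun h => h⟩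
  let ιB : G.induce (B : Set V) →g G.induce S := ⟨Set.inclusion hBS, fun h => h⟩
  let c : Sym2 S → ℕ := fun e =>
    if ∀ x ∈ e, (x : V) ∈ A then extendColor (A : Set V) cA (e.map Subtype.val)
    else if ∀ x ∈ e, (x : V) ∈ B then nA + extendColor (B : Set V) cB (e.map Subtype.val)
    else nA + nB
  have keyA : ∀ e : Sym2 (A : Set V), c (e.map ιA) = cA e := by
    intro e
    induction e with
    | h x y =>
      have hcond : ∀ z ∈ s(ιA x, ιA y), (z : V) ∈ A := sym2_forall_mem.2 ⟨x.2, y.2⟩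
      show c (Sym2.map ιA s(x, y)) = cA s(x, y)
      rw [Sym2.map_pair_eq]
      show (if _ then _ else _) = _
      rw [if_pos hcond, Sym2.map_pair_eq]
      exact extendColor_apply (A : Set V) cA x y
  have keyB : ∀ e : Sym2 (B : Set V), c (e.map ιB) = nA + cB e := by
    intro e
    induction e with
    | h x y =>
      have hcond : ∀ z ∈ s(ιB x, ιB y), (z : V) ∈ B := sym2_forall_mem.2 ⟨x.2, y.2⟩
      have hncond : ¬ ∀ z ∈ s(ιB x, ιB y), (z : V) ∈ A := by
        intro h
        exact Finset.disjoint_left.1 hd (h (ιB x) (by simp)) x.2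
      show c (Sym2.map ιB s(x, y)) = nA + cB s(x, y)
      rw [Sym2.map_pair_eq]
      show (if _ then _ else _) = _
      rw [if_neg hncond, if_pos hcond, Sym2.map_pair_eq]
      exact congrArg (fun t => nA + t) (extendColor_apply (B : Set V) cB x y)
  have pathA : ∀ (u v : S), (u : V) ∈ A → (v : V) ∈ A →
      ∃ p : (G.induce S).Walk u v, p.IsPath ∧ (p.edges.map c).Nodup ∧
        (∀ x ∈ p.support, (x : V) ∈ A) ∧ (∀ m ∈ p.edges.map c, m < nA) := by
    intro u v hu hv
    obtain ⟨p, hp, hnd⟩ := hcA ⟨u, hu⟩ ⟨v, hv⟩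
    refine ⟨(p.map ιA).copy (Subtype.ext rfl) (Subtype.ext rfl), ?_, ?_, ?_, ?_⟩
    · rw [SimpleGraph.Walk.isPath_copy]
      exact p.map_isPath_of_injective (Set.inclusion_injective hAS) hp
    · rw [SimpleGraph.Walk.edges_copy, SimpleGraph.Walk.edges_map, List.map_map]
      have : c ∘ Sym2.map ιA = cA := funext keyA
      rw [this]; exact hnd
    · intro x hx
      rw [SimpleGraph.Walk.support_copy, SimpleGraph.Walk.support_map] at hx
      obtain ⟨y, _, rfl⟩ := List.mem_map.1 hx
      exact y.2
    · intro m hm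
      rw [SimpleGraph.Walk.edges_copy, SimpleGraph.Walk.edges_map, List.map_map] at hm
      have : c ∘ Sym2.map ιA = cA := funext keyA
      rw [this] at hm
      obtain ⟨e, he, rfl⟩ := List.mem_map.1 hm
      exact hcAb e (p.edges_subset_edgeSet he)
  have pathB : ∀ (u v : S), (u : V) ∈ B → (v : V) ∈ B →
      ∃ p : (G.induce S).Walk u v, p.IsPath ∧ (p.edges.map c).Nodup ∧
        (∀ x ∈ p.support, (x : V) ∈ B) ∧ (∀ m ∈ p.edges.map c, nA ≤ m ∧ m < nA + nB) := by
    intro u v hu hv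
    obtain ⟨p, hp, hnd⟩ := hcB ⟨u, hu⟩ ⟨v, hv⟩
    refine ⟨(p.map ιB).copy (Subtype.ext rfl) (Subtype.ext rfl), ?_, ?_, ?_, ?_⟩
    · rw [SimpleGraph.Walk.isPath_copy]
      exact p.map_isPath_of_injective (Set.inclusion_injective hBS) hp
    · rw [SimpleGraph.Walk.edges_copy, SimpleGraph.Walk.edges_map, List.map_map]
      have : c ∘ Sym2.map ιB = fun e => nA + cB e := funext keyB
      rw [this]
      have h2 : (List.map (fun e => nA + cB e) p.edges) =
          List.map (fun m => nA + m) (List.map cB p.edges) := by rw [List.map_map]; rfl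
      rw [h2]
      exact hnd.map (fun x y h => by omega)
    · intro x hx
      rw [SimpleGraph.Walk.support_copy, SimpleGraph.Walk.support_map] at hx
      obtain ⟨y, _, rfl⟩ := List.mem_map.1 hx
      exact y.2
    · intro m hm
      rw [SimpleGraph.Walk.edges_copy, SimpleGraph.Walk.edges_map, List.map_map] at hm
      have : c ∘ Sym2.map ιB = fun e => nA + cB e := funext keyB
      rw [this] at hm
      obtain ⟨e, he, rfl⟩ := List.mem_map.1 hm
      have := hcBb e (p.edges_subset_edgeSet he)
      omega
  have ha' : a ∈ S := hAS ha
  have hb' : b ∈ S := hBS hb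
  have hcross : c s(⟨a, ha'⟩, ⟨b, hb'⟩) = nA + nB := by
    show (if _ then _ else _) = _
    rw [if_neg, if_neg]
    · intro h
      exact Finset.disjoint_left.1 hd ha (h ⟨a, ha'⟩ (by simp))
    · intro h
      exact Finset.disjoint_left.1 hd (h ⟨b, hb'⟩ (by simp)) hb
  have cross : ∀ (u v : S), (u : V) ∈ A → (v : V) ∈ B →
      ∃ p : (G.induce S).Walk u v, p.IsPath ∧ (p.edges.map c).Nodup := by
    intro u v hu hv
    obtain ⟨p1, hp1, hnd1, hsup1, hbd1⟩ := pathA u ⟨a, ha'⟩ hu ha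
    obtain ⟨p2, hp2, hnd2, hsup2, hbd2⟩ := pathB ⟨b, hb'⟩ v hb hv
    have hab' : (G.induce S).Adj ⟨a, ha'⟩ ⟨b, hb'⟩ := hab
    refine ⟨p1.append (SimpleGraph.Walk.cons hab' p2), ?_, ?_⟩
    · rw [SimpleGraph.Walk.isPath_def, SimpleGraph.Walk.support_append,
        SimpleGraph.Walk.support_cons, List.tail_cons]
      refine List.Nodup.append (hp1.support_nodup) (hp2.support_nodup) ?_
      intro x hx1 hx2
      exact Finset.disjoint_left.1 hd (hsup1 x hx1) (hsup2 x hx2)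
    · rw [SimpleGraph.Walk.edges_append, SimpleGraph.Walk.edges_cons, List.map_append,
        List.map_cons, hcross]
      rw [List.nodup_append]
      refine ⟨hnd1, ?_, ?_⟩
      · rw [List.nodup_cons]
        refine ⟨fun h => ?_, hnd2⟩
        have := (hbd2 _ h).2
        omega
      · intro m hm1 m' hm2 heq
        subst m'
        have h1 := hbd1 m hm1
        rcases List.mem_cons.1 hm2 with rfl | hm2
        · omega
        · have := (hbd2 m hm2).1
          omega
  have hrc : RainbowConnected (G.induce S) c := by
    intro u v
    rcases (hmemS u).1 u.2 with hu | hu <;> rcases (hmemS v).1 v.2 with hv | hv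
    · obtain ⟨p, hp, hnd, _, _⟩ := pathA u v hu hv
      exact ⟨p, hp, hnd⟩
    · exact cross u v hu hv
    · obtain ⟨p, hp, hnd⟩ := cross v u hv hu
      exact ⟨p.reverse, hp.reverse, by rw [SimpleGraph.Walk.edges_reverse,
        List.map_reverse, List.nodup_reverse]; exact hnd⟩
    · obtain ⟨p, hp, hnd, _, _⟩ := pathB u v hu hv
      exact ⟨p, hp, hnd⟩
  constructor
  · rw [show ((A ∪ B : Finset V) : Set V) = S from rfl]
    rw [SimpleGraph.connected_iff]
    exact ⟨fun u v => ⟨(hrc u v).choose⟩, ⟨⟨a, ha'⟩⟩⟩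
  · apply Nat.sInf_le
    refine ⟨c, ?_, hrc⟩
    intro e he
    induction e with
    | h x y =>
      rw [SimpleGraph.mem_edgeSet] at he
      have hadj : G.Adj (x : V) (y : V) := he
      show (if _ then _ else _) < nA + nB + 1
      split_ifs with h1 h2
      · obtain ⟨hxA, hyA⟩ := sym2_forall_mem.1 h1
        rw [Sym2.map_pair_eq, extendColor_apply (A : Set V) cA ⟨x, hxA⟩ ⟨y, hyA⟩]
        have : cA s(⟨(x : V), hxA⟩, ⟨(y : V), hyA⟩) < nA := hcAb _ hadj
        exact lt_of_lt_of_le this (by omega)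
      · obtain ⟨hxB, hyB⟩ := sym2_forall_mem.1 h2
        rw [Sym2.map_pair_eq, extendColor_apply (B : Set V) cB ⟨x, hxB⟩ ⟨y, hyB⟩]
        have : cB s(⟨(x : V), hxB⟩, ⟨(y : V), hyB⟩) < nB := hcBb _ hadj
        have h3 : nA + cB s(⟨(x : V), hxB⟩, ⟨(y : V), hyB⟩) < nA + nB + 1 := by omega
        exact h3
      · exact Nat.lt_succ_self _

lemma exists_cross_edge {V : Type*} [Fintype V] [DecidableEq V] (G : SimpleGraph V)
    (s : Finset (Finset V))
    (hdisj : ∀ C ∈ s, ∀ D ∈ s, C ≠ D → Disjoint C D)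
    (hU : (G.induce ((s.sup id : Finset V) : Set V)).Connected)
    (h2 : 2 ≤ s.card) (hne : ∀ C ∈ s, C.Nonempty) :
    ∃ C ∈ s, ∃ D ∈ s, C ≠ D ∧ ∃ u ∈ C, ∃ v ∈ D, G.Adj u v := by
  classical
  obtain ⟨C0, hC0, D0, hD0, hCD0⟩ := Finset.one_lt_card.1 h2
  obtain ⟨a, ha⟩ := hne C0 hC0
  obtain ⟨b, hb⟩ := hne D0 hD0
  have haU : a ∈ ((s.sup id : Finset V) : Set V) :=
    Finset.mem_coe.2 (Finset.mem_sup.2 ⟨C0, hC0, ha⟩)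
  have hbU : b ∈ ((s.sup id : Finset V) : Set V) :=
    Finset.mem_coe.2 (Finset.mem_sup.2 ⟨D0, hD0, hb⟩)
  obtain ⟨w⟩ := hU.preconnected ⟨a, haU⟩ ⟨b, hbU⟩
  have key : ∀ (x y : ((s.sup id : Finset V) : Set V))
      (w : (G.induce ((s.sup id : Finset V) : Set V)).Walk x y),
      ∀ C ∈ s, (x : V) ∈ C → ∀ D ∈ s, (y : V) ∈ D → C ≠ D →
      ∃ C ∈ s, ∃ D ∈ s, C ≠ D ∧ ∃ u ∈ C, ∃ v ∈ D, G.Adj u v := by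
    intro x y w
    induction w with
    | nil =>
      intro C hC hxC D hD hxD hCD
      exact absurd hxD (Finset.disjoint_left.1 (hdisj C hC D hD hCD) hxC)
    | @cons x z y hadj p ih =>
      intro C hC hxC D hD hyD hCD
      have hzU : (z : V) ∈ s.sup id := z.2
      obtain ⟨E, hE, hzE⟩ := Finset.mem_sup.1 hzU
      by_cases hEC : E = C
      · exact ih C hC (hEC ▸ hzE) D hD hyD hCD
      · exact ⟨C, hC, E, hE, fun h => hEC h.symm, (x : V), hxC, (z : V), hzE, hadj⟩
  exact key _ _ w C0 hC0 ha D0 hD0 hb hCD0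

lemma main_induction {V : Type*} [Fintype V] [DecidableEq V] (G : SimpleGraph V) :
    ∀ (n : ℕ) (s : Finset (Finset V)), s.card = n → s.Nonempty →
    (∀ C ∈ s, ∀ D ∈ s, C ≠ D → Disjoint C D) →
    (∀ C ∈ s, (G.induce (C : Set V)).Connected) →
    (G.induce ((s.sup id : Finset V) : Set V)).Connected →
    rc (G.induce ((s.sup id : Finset V) : Set V)) ≤
      (s.card - 1) + ∑ C ∈ s, rc (G.induce (C : Set V)) := by
  classical
  intro n
  induction n using Nat.strong_induction_on with
  | _ n ih =>
    intro s hcard hsne hdisj hconn hU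
    rcases eq_or_lt_of_le (Finset.one_le_card.2 hsne) with h1 | h2
    · obtain ⟨C, rfl⟩ := Finset.card_eq_one.1 h1.symm
      have hsup1 : ({C} : Finset (Finset V)).sup id = C := Finset.sup_singleton
      rw [hsup1]
      simp
    · have hne : ∀ C ∈ s, C.Nonempty := by
        intro C hC
        have := (hconn C hC).nonempty
        obtain ⟨⟨x, hx⟩⟩ := this
        exact ⟨x, hx⟩
      obtain ⟨C, hC, D, hD, hCD, u, hu, v, hv, huv⟩ :=
        exists_cross_edge G s hdisj hU h2 hne
      obtain ⟨hconnCD, hrcCD⟩ := merge_lemma G C D (hdisj C hC D hD hCD)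
        (hconn C hC) (hconn D hD) hu hv huv
      set t : Finset (Finset V) := (s.erase C).erase D with ht
      have hDC : D ∈ s.erase C := Finset.mem_erase.2 ⟨fun h => hCD h.symm, hD⟩
      have hs_eq : insert C (insert D t) = s := by
        rw [ht, Finset.insert_erase hDC, Finset.insert_erase hC]
      have hCDt : (C ∪ D) ∉ t := by
        intro hmem
        have hEs : (C ∪ D) ∈ s := Finset.mem_of_mem_erase (Finset.mem_of_mem_erase hmem)
        have hEneC : (C ∪ D) ≠ C := (Finset.mem_erase.1 (Finset.mem_of_mem_erase hmem)).1
        have hdisj2 := hdisj C hC (C ∪ D) hEs (fun h => hEneC h.symm)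
        obtain ⟨x, hx⟩ := hne C hC
        exact Finset.disjoint_left.1 hdisj2 hx (Finset.mem_union_left _ hx)
      set s' : Finset (Finset V) := insert (C ∪ D) t with hs'
      have hsup : s'.sup id = s.sup id := by
        rw [hs', Finset.sup_insert, ← hs_eq, Finset.sup_insert, Finset.sup_insert]
        simp only [id_eq]
        simp only [Finset.sup_eq_union, Finset.union_assoc]
      have hCt : C ∉ insert D t := by
        intro h
        rcases Finset.mem_insert.1 h with h | h
        · exact hCD h
        · exact (Finset.mem_erase.1 (Finset.mem_of_mem_erase h)).1 rfl
      have hDt : D ∉ t := by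
        intro h
        exact (Finset.mem_erase.1 h).1 rfl
      have hcard' : s'.card = s.card - 1 := by
        rw [hs', Finset.card_insert_of_notMem hCDt]
        have : s.card = (insert C (insert D t)).card := by rw [hs_eq]
        rw [Finset.card_insert_of_notMem hCt, Finset.card_insert_of_notMem hDt] at this
        omega
      have hmem_t_s : ∀ E ∈ t, E ∈ s := fun E hE =>
        Finset.mem_of_mem_erase (Finset.mem_of_mem_erase hE)
      have hdisj' : ∀ C' ∈ s', ∀ D' ∈ s', C' ≠ D' → Disjoint C' D' := by
        intro C' hC' D' hD' hne'
        rcases Finset.mem_insert.1 hC' with rfl | hC't <;>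
          rcases Finset.mem_insert.1 hD' with rfl | hD't
        · exact absurd rfl hne'
        · have hDs := hmem_t_s _ hD't
          have h1 : D' ≠ C := fun h => hCt (h ▸ Finset.mem_insert_of_mem (h ▸ hD't))
          refine Finset.disjoint_union_left.2 ⟨?_, ?_⟩
          · exact hdisj C hC D' hDs fun h =>
              (Finset.mem_erase.1 (Finset.mem_of_mem_erase (h ▸ hD't))).1 rfl
          · exact hdisj D hD D' hDs fun h => (Finset.mem_erase.1 (h ▸ hD't)).1 rfl
        · have hCs := hmem_t_s _ hC't
          refine Finset.disjoint_union_right.2 ⟨?_, ?_⟩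
          · exact hdisj C' hCs C hC fun h =>
              (Finset.mem_erase.1 (Finset.mem_of_mem_erase (h ▸ hC't))).1 rfl
          · exact hdisj C' hCs D hD fun h => (Finset.mem_erase.1 (h ▸ hC't)).1 rfl
        · exact hdisj C' (hmem_t_s _ hC't) D' (hmem_t_s _ hD't) hne'
      have hconn' : ∀ E ∈ s', (G.induce (E : Set V)).Connected := by
        intro E hE
        rcases Finset.mem_insert.1 hE with rfl | hEt
        · exact hconnCD
        · exact hconn E (hmem_t_s _ hEt)
      have hU' : (G.induce ((s'.sup id : Finset V) : Set V)).Connected := by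
        rw [hsup]; exact hU
      have hsum : ∑ E ∈ s', rc (G.induce (E : Set V)) =
          rc (G.induce ((C ∪ D : Finset V) : Set V)) + ∑ E ∈ t, rc (G.induce (E : Set V)) := by
        rw [hs', Finset.sum_insert hCDt]
      have hsum2 : ∑ E ∈ s, rc (G.induce (E : Set V)) =
          rc (G.induce (C : Set V)) + (rc (G.induce (D : Set V)) +
            ∑ E ∈ t, rc (G.induce (E : Set V))) := by
        rw [← hs_eq, Finset.sum_insert hCt, Finset.sum_insert hDt]
      have hs'ne : s'.Nonempty := ⟨C ∪ D, Finset.mem_insert_self _ _⟩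
      have hlt : s'.card < n := by omega
      have hmain := ih s'.card hlt s' rfl hs'ne hdisj' hconn' hU'
      rw [hsup] at hmain
      rw [hsum] at hmain
      rw [hsum2]
      have := le_trans hmain (by
        have := hrcCD
        omega : s'.card - 1 + (rc (G.induce ((C ∪ D : Finset V) : Set V)) +
          ∑ E ∈ t, rc (G.induce (E : Set V))) ≤
          s.card - 1 + (rc (G.induce (C : Set V)) + (rc (G.induce (D : Set V)) +
            ∑ E ∈ t, rc (G.induce (E : Set V)))))
      exact this

lemma rc_induce_congr {V : Type*} [Fintype V] (G : SimpleGraph V) (X Y : Set V)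
    [Fintype X] [Fintype Y] (h : X = Y) : rc (G.induce X) = rc (G.induce Y) := by
  subst h
  rfl

theorem rc_le_of_partition {V : Type*} [Fintype V] [DecidableEq V] (G : SimpleGraph V)
    (hG : G.Connected) (k : ℕ) (H : Fin k → Finset V)
    (hpart : ∀ v : V, ∃! i, v ∈ H i)
    (hconn : ∀ i, (G.induce (H i : Set V)).Connected) :
    rc G ≤ k - 1 + ∑ i, rc (G.induce (H i : Set V)) := by
  classical
  have hne : ∀ i, (H i).Nonempty := by
    intro i
    obtain ⟨⟨x, hx⟩⟩ := (hconn i).nonempty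
    exact ⟨x, hx⟩
  have hinj : Function.Injective H := by
    intro i j hij
    obtain ⟨x, hx⟩ := hne i
    obtain ⟨i', hi', huniq⟩ := hpart x
    have hxj : x ∈ H j := by rw [← hij]; exact hx
    exact (huniq i hx).trans (huniq j hxj).symm
  set s : Finset (Finset V) := Finset.univ.image H with hs
  obtain ⟨v0⟩ := hG.nonempty
  obtain ⟨i0, hi0, _⟩ := hpart v0
  have hsne : s.Nonempty := ⟨H i0, Finset.mem_image.2 ⟨i0, Finset.mem_univ _, rfl⟩⟩
  have hdisj : ∀ C ∈ s, ∀ D ∈ s, C ≠ D → Disjoint C D := by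
    intro C hC D hD hCD
    obtain ⟨i, _, rfl⟩ := Finset.mem_image.1 hC
    obtain ⟨j, _, rfl⟩ := Finset.mem_image.1 hD
    rw [Finset.disjoint_left]
    intro x hxi hxj
    obtain ⟨i', _, huniq⟩ := hpart x
    exact hCD (((huniq i hxi).trans (huniq j hxj).symm) ▸ rfl)
  have hconn' : ∀ C ∈ s, (G.induce (C : Set V)).Connected := by
    intro C hC
    obtain ⟨i, _, rfl⟩ := Finset.mem_image.1 hC
    exact hconn i
  have hsupu : s.sup id = (Finset.univ : Finset V) := by
    ext x
    simp only [Finset.mem_univ, iff_true, Finset.mem_sup]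
    obtain ⟨i, hi, _⟩ := hpart x
    exact ⟨H i, Finset.mem_image.2 ⟨i, Finset.mem_univ _, rfl⟩, hi⟩
  have hcoe : ((s.sup id : Finset V) : Set V) = Set.univ := by
    rw [hsupu, Finset.coe_univ]
  have hU : (G.induce ((s.sup id : Finset V) : Set V)).Connected := by
    rw [hcoe]
    exact (G.induceUnivIso).connected_iff.2 hG
  have hcard : s.card = k := by
    rw [hs, Finset.card_image_of_injective _ hinj, Finset.card_univ, Fintype.card_fin]
  have hsum : ∑ C ∈ s, rc (G.induce (C : Set V)) = ∑ i, rc (G.induce (H i : Set V)) := by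
    rw [hs, Finset.sum_image (fun i _ j _ h => hinj h)]
  have hmain := main_induction G s.card s rfl hsne hdisj hconn' hU
  rw [hcard, hsum] at hmain
  have hrcG : rc G = rc (G.induce ((s.sup id : Finset V) : Set V)) := by
    rw [rc_induce_congr G _ _ hcoe]
    exact (rc_eq_of_iso _ _ (G.induceUnivIso)).symm
  rw [hrcG]
  exact hmain
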